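/- Let p ≥ 5 be a prime and let G = ⟨a,b,c,d | [c,a], [c,b], [d,a], [d,b], [d,c]⟩ be the class-2 exponent-p group on four generators with those five relations (group 5.4.1, of order p^5). Then the number of conjugacy classes of G is p^4 + p^3 − p^2, and the automorphism group of G has order (p^2 − 1)^2(p^2 − p)^2 p^8. -/

import Mathlib

/-- The commutator `u⁻¹v⁻¹uv`. -/
def fgComm {α : Type} (u v : FreeGroup α) : FreeGroup α := u⁻¹ * v⁻¹ * u * v

/-- The relator set for the largest class-2 exponent-`p` group on `n` generators
satisfying the extra relations `R`: we add all `p`-th powers and all triple commutators. -/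
def classTwoRels (p n : ℕ) (R : Set (FreeGroup (Fin n))) : Set (FreeGroup (Fin n)) :=
  R ∪ (Set.range fun w : FreeGroup (Fin n) => w ^ p) ∪
    {x | ∃ u v w : FreeGroup (Fin n), x = fgComm (fgComm u v) w}

/-- The largest class-2 exponent-`p` group on `n` generators satisfying the relations `R`. -/
def ClassTwoGroup (p n : ℕ) (R : Set (FreeGroup (Fin n))) : Type :=
  PresentedGroup (classTwoRels p n R)

instance (p n : ℕ) (R : Set (FreeGroup (Fin n))) : Group (ClassTwoGroup p n R) := by
  unfold ClassTwoGroup; infer_instance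

/-- `H` is a class-3 descendant of `G` of order `p^9` with exponent `p`. -/
def IsClass3Descendant (p : ℕ) (G : Type) [Group G] (H : Type) [Group H] : Prop :=
  Nat.card H = p ^ 9 ∧ Monoid.exponent H = p ∧
    Subgroup.lowerCentralSeries (⊤ : Subgroup H) 3 = ⊥ ∧ Subgroup.lowerCentralSeries (⊤ : Subgroup H) 2 ≠ ⊥ ∧
    Nonempty ((H ⧸ Subgroup.lowerCentralSeries (⊤ : Subgroup H) 2) ≃* G)

/-- The multiplication underlying a group structure. -/
def mulOfGroup {α : Type} (g : Group α) : Mul α := by letI := g; infer_instance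

/-- `P` has exactly `k` isomorphism classes of groups satisfying it. -/
def IsIsoClassCount (P : (H : Type) → Group H → Prop) (k : ℕ) : Prop :=
  ∃ (H : Fin k → Type) (inst : (i : Fin k) → Group (H i)),
    (∀ i, P (H i) (inst i)) ∧
    (∀ i j : Fin k, i ≠ j →
      ¬ Nonempty (@MulEquiv (H i) (H j) (mulOfGroup (inst i)) (mulOfGroup (inst j)))) ∧
    (∀ (K : Type) (instK : Group K), P K instK →
      ∃ i, Nonempty (@MulEquiv K (H i) (mulOfGroup instK) (mulOfGroup (inst i))))

/-- `G` has exactly `k` class-3 descendants of order `p^9` with exponent `p`,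
up to isomorphism. -/
def DescendantCount (p : ℕ) (G : Type) [Group G] (k : ℕ) : Prop :=
  IsIsoClassCount (fun H inst => @IsClass3Descendant p G _ H inst) k


variable {p : ℕ}

/-- Model for group 5.4.1: Heisenberg × (ZMod p)². -/
@[ext]
structure Mdl (p : ℕ) where
  a : ZMod p
  b : ZMod p
  c : ZMod p
  d : ZMod p
  e : ZMod p
  deriving DecidableEq

namespace Mdl

instance : Mul (Mdl p) :=
  ⟨fun x y => ⟨x.a + y.a, x.b + y.b, x.c + y.c, x.d + y.d, x.e + y.e + x.b * y.a⟩⟩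
instance : One (Mdl p) := ⟨⟨0, 0, 0, 0, 0⟩⟩
instance : Inv (Mdl p) := ⟨fun x => ⟨-x.a, -x.b, -x.c, -x.d, -x.e + x.b * x.a⟩⟩

@[simp] lemma mul_a (x y : Mdl p) : (x * y).a = x.a + y.a := rfl
@[simp] lemma mul_b (x y : Mdl p) : (x * y).b = x.b + y.b := rfl
@[simp] lemma mul_c (x y : Mdl p) : (x * y).c = x.c + y.c := rfl
@[simp] lemma mul_d (x y : Mdl p) : (x * y).d = x.d + y.d := rfl
@[simp] lemma mul_e (x y : Mdl p) : (x * y).e = x.e + y.e + x.b * y.a := rfl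
@[simp] lemma one_a : (1 : Mdl p).a = 0 := rfl
@[simp] lemma one_b : (1 : Mdl p).b = 0 := rfl
@[simp] lemma one_c : (1 : Mdl p).c = 0 := rfl
@[simp] lemma one_d : (1 : Mdl p).d = 0 := rfl
@[simp] lemma one_e : (1 : Mdl p).e = 0 := rfl
@[simp] lemma inv_a (x : Mdl p) : x⁻¹.a = -x.a := rfl
@[simp] lemma inv_b (x : Mdl p) : x⁻¹.b = -x.b := rfl
@[simp] lemma inv_c (x : Mdl p) : x⁻¹.c = -x.c := rfl
@[simp] lemma inv_d (x : Mdl p) : x⁻¹.d = -x.d := rfl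
@[simp] lemma inv_e (x : Mdl p) : x⁻¹.e = -x.e + x.b * x.a := rfl

instance : Group (Mdl p) where
  mul_assoc x y z := by ext <;> simp <;> ring
  one_mul x := by ext <;> simp
  mul_one x := by ext <;> simp
  inv_mul_cancel x := by ext <;> simp <;> ring

lemma pow_def (x : Mdl p) (n : ℕ) :
    x ^ n = ⟨n * x.a, n * x.b, n * x.c, n * x.d,
      n * x.e + (n.choose 2 : ℕ) * (x.a * x.b)⟩ := by
  induction n with
  | zero => ext <;> simp
  | succ n ih =>
    rw [pow_succ, ih]
    have h2 : (n + 1).choose 2 = n + n.choose 2 := by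
      have := Nat.choose_succ_succ n 1
      simpa using this
    ext <;> simp [h2] <;> push_cast <;> ring

lemma pow_p (hp : p.Prime) (hodd : p ≠ 2) (x : Mdl p) : x ^ p = 1 := by
  have h1 : ((p : ℕ) : ZMod p) = 0 := by simp
  have h2 : ((p.choose 2 : ℕ) : ZMod p) = 0 := by
    have hd : p ∣ p.choose 2 :=
      hp.dvd_choose_self (by norm_num) (by have := hp.two_le; omega)
    haveI : NeZero p := ⟨hp.ne_zero⟩; exact (ZMod.natCast_eq_zero_iff _ _).2 hd
  rw [pow_def]
  ext <;> simp [h1, h2]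

/-- commutator -/
lemma comm_eq (x y : Mdl p) :
    x⁻¹ * y⁻¹ * x * y = ⟨0, 0, 0, 0, x.b * y.a - y.b * x.a⟩ := by
  ext <;> simp <;> ring

lemma central_mul_comm (x y : Mdl p) (ha : x.a = 0) (hb : x.b = 0) :
    x * y = y * x := by
  ext <;> simp [ha, hb] <;> ring

end Mdl

/-! ### Presentation -/

/-- group commutator -/
def cmm {G : Type*} [Group G] (x y : G) : G := x⁻¹ * y⁻¹ * x * y

lemma commute_of_cmm {G : Type*} [Group G] {x y : G} (h : cmm x y = 1) : Commute x y := by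
  have h' : x⁻¹ * y⁻¹ * x * y = 1 := h
  show x * y = y * x
  calc x * y = y * x * (x⁻¹ * y⁻¹ * x * y) := by group
    _ = y * x := by rw [h', mul_one]

lemma cmm_of_commute {G : Type*} [Group G] {x y : G} (h : Commute x y) : cmm x y = 1 := by
  unfold cmm
  rw [mul_assoc, h.eq]; group

lemma map_cmm {G H : Type*} [Group G] [Group H] (f : G →* H) (x y : G) :
    f (cmm x y) = cmm (f x) (f y) := by simp [cmm]

lemma lift_fgComm {α : Type} {G : Type*} [Group G] (f : α → G) (u v : FreeGroup α) :
    FreeGroup.lift f (fgComm u v) = cmm (FreeGroup.lift f u) (FreeGroup.lift f v) := by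
  simp [fgComm, cmm]

def R5 : Set (FreeGroup (Fin 4)) :=
  {fgComm (FreeGroup.of (2 : Fin 4)) (FreeGroup.of (0 : Fin 4)),
   fgComm (FreeGroup.of (2 : Fin 4)) (FreeGroup.of (1 : Fin 4)),
   fgComm (FreeGroup.of (3 : Fin 4)) (FreeGroup.of (0 : Fin 4)),
   fgComm (FreeGroup.of (3 : Fin 4)) (FreeGroup.of (1 : Fin 4)),
   fgComm (FreeGroup.of (3 : Fin 4)) (FreeGroup.of (2 : Fin 4))}

/-- The relation check for building homomorphisms out of the presented group. -/
lemma lift_rels {G : Type*} [Group G] (f : Fin 4 → G)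
    (hpow : ∀ g : G, g ^ p = 1)
    (hcent : ∀ u v w : G, cmm (cmm u v) w = 1)
    (h20 : cmm (f 2) (f 0) = 1) (h21 : cmm (f 2) (f 1) = 1)
    (h30 : cmm (f 3) (f 0) = 1) (h31 : cmm (f 3) (f 1) = 1)
    (h32 : cmm (f 3) (f 2) = 1) :
    ∀ r ∈ classTwoRels p 4 R5, FreeGroup.lift f r = 1 := by
  rintro r (⟨hr | ⟨w, rfl⟩⟩ | ⟨u, v, w, rfl⟩)
  · rcases hr with h | h | h | h | h <;> subst h <;>
      simp only [lift_fgComm, FreeGroup.lift_apply_of] <;> assumption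
  · rw [map_pow]; exact hpow _
  · rw [lift_fgComm, lift_fgComm]; exact hcent _ _ _

abbrev PG (p : ℕ) : Type := PresentedGroup (classTwoRels p 4 R5)

namespace PG

variable (p) in
def x (i : Fin 4) : PG p := PresentedGroup.of i

lemma mk_rel_one {r : FreeGroup (Fin 4)} (h : r ∈ classTwoRels p 4 R5) :
    PresentedGroup.mk _ r = (1 : PG p) :=
  (QuotientGroup.eq_one_iff _).2 (Subgroup.subset_normalClosure h)

lemma pow_p_eq_one (g : PG p) : g ^ p = 1 := by
  obtain ⟨w, rfl⟩ := PresentedGroup.mk_surjective _ g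
  rw [← map_pow]
  exact mk_rel_one (Or.inl (Or.inr ⟨w, rfl⟩))

lemma cmm_central (u v w : PG p) : cmm (cmm u v) w = 1 := by
  obtain ⟨a, rfl⟩ := PresentedGroup.mk_surjective _ u
  obtain ⟨b, rfl⟩ := PresentedGroup.mk_surjective _ v
  obtain ⟨c, rfl⟩ := PresentedGroup.mk_surjective _ w
  rw [← map_cmm, ← map_cmm]
  have : cmm (cmm a b) c = fgComm (fgComm a b) c := rfl
  rw [this]
  exact mk_rel_one (Or.inr ⟨a, b, c, rfl⟩)

lemma commute_cmm (u v w : PG p) : Commute (cmm u v) w :=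
  commute_of_cmm (cmm_central u v w)

lemma rel_of_mem {u v : FreeGroup (Fin 4)} (h : fgComm u v ∈ R5) :
    cmm (PresentedGroup.mk (classTwoRels p 4 R5) u) (PresentedGroup.mk _ v) = 1 := by
  rw [← map_cmm]
  exact mk_rel_one (Or.inl (Or.inl h))

lemma comm20 : Commute (x p 2) (x p 0) :=
  commute_of_cmm (rel_of_mem (by left; rfl))
lemma comm21 : Commute (x p 2) (x p 1) :=
  commute_of_cmm (rel_of_mem (by right; left; rfl))
lemma comm30 : Commute (x p 3) (x p 0) :=
  commute_of_cmm (rel_of_mem (by right; right; left; rfl))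
lemma comm31 : Commute (x p 3) (x p 1) :=
  commute_of_cmm (rel_of_mem (by right; right; right; left; rfl))
lemma comm32 : Commute (x p 3) (x p 2) :=
  commute_of_cmm (rel_of_mem (by right; right; right; right; rfl))

variable (p) in
/-- The central commutator. -/
def z : PG p := cmm (x p 1) (x p 0)

lemma z_central (w : PG p) : Commute (z p) w := commute_cmm _ _ _

lemma x2_central (w : PG p) : Commute (x p 2) w := by
  have : w ∈ Subgroup.centralizer {x p 2} := by
    apply PresentedGroup.generated_by
    intro j
    rw [Subgroup.mem_centralizer_iff]
    rintro g ⟨rfl⟩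
    fin_cases j
    · exact comm20.eq
    · exact comm21.eq
    · rfl
    · exact comm32.symm.eq
  exact Subgroup.mem_centralizer_iff.1 this _ rfl

end PG

namespace PG

lemma x3_central (w : PG p) : Commute (x p 3) w := by
  have : w ∈ Subgroup.centralizer {x p 3} := by
    apply PresentedGroup.generated_by
    intro j
    rw [Subgroup.mem_centralizer_iff]
    rintro g ⟨rfl⟩
    fin_cases j
    · exact comm30.eq
    · exact comm31.eq
    · exact comm32.eq
    · rfl
  exact Subgroup.mem_centralizer_iff.1 this _ rfl

lemma swap1 : x p 1 * x p 0 = x p 0 * (x p 1 * z p) := by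
  show _ = _ * (_ * ((x p 1)⁻¹ * (x p 0)⁻¹ * x p 1 * x p 0))
  group

lemma swap1' (w : PG p) : x p 1 * (x p 0 * w) = x p 0 * (x p 1 * (z p * w)) := by
  rw [← mul_assoc, swap1]; simp only [mul_assoc]

lemma swap_pow_one (i : ℕ) : x p 1 * (x p 0) ^ i = (x p 0) ^ i * (x p 1 * (z p) ^ i) := by
  induction i with
  | zero => simp
  | succ i ih =>
    calc x p 1 * x p 0 ^ (i + 1)
        = x p 1 * (x p 0 * x p 0 ^ i) := by rw [pow_succ']
      _ = x p 0 * (x p 1 * (z p * x p 0 ^ i)) := swap1' _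
      _ = x p 0 * (x p 1 * (x p 0 ^ i * z p)) := by rw [((z_central (x p 0)).pow_right i).eq]
      _ = x p 0 * ((x p 1 * x p 0 ^ i) * z p) := by simp only [mul_assoc]
      _ = x p 0 * ((x p 0 ^ i * (x p 1 * z p ^ i)) * z p) := by rw [ih]
      _ = x p 0 ^ (i + 1) * (x p 1 * z p ^ (i + 1)) := by
          rw [pow_succ' (x p 0), pow_succ (z p)]; simp only [mul_assoc]

lemma swap_pow (j i : ℕ) : (x p 1) ^ j * (x p 0) ^ i
    = (x p 0) ^ i * ((x p 1) ^ j * (z p) ^ (j * i)) := by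
  induction j with
  | zero => simp
  | succ j ih =>
    calc (x p 1) ^ (j + 1) * (x p 0) ^ i
        = x p 1 * ((x p 1) ^ j * (x p 0) ^ i) := by rw [pow_succ']; simp only [mul_assoc]
      _ = x p 1 * ((x p 0) ^ i * ((x p 1) ^ j * (z p) ^ (j * i))) := by rw [ih]
      _ = (x p 1 * (x p 0) ^ i) * ((x p 1) ^ j * (z p) ^ (j * i)) := by simp only [mul_assoc]
      _ = ((x p 0) ^ i * (x p 1 * (z p) ^ i)) * ((x p 1) ^ j * (z p) ^ (j * i)) := by
          rw [swap_pow_one]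
      _ = (x p 0) ^ i * (x p 1 * ((z p) ^ i * ((x p 1) ^ j * (z p) ^ (j * i)))) := by
          simp only [mul_assoc]
      _ = (x p 0) ^ i * (x p 1 * ((x p 1) ^ j * ((z p) ^ i * (z p) ^ (j * i)))) := by
          rw [((z_central (x p 1)).pow_pow i j).left_comm]
      _ = (x p 0) ^ i * ((x p 1) ^ (j + 1) * (z p) ^ ((j + 1) * i)) := by
          rw [← pow_add, show i + j * i = (j + 1) * i by ring, pow_succ' (x p 1)]
          simp only [mul_assoc]

/-- normal forms -/
def nf (i j k l m : ℕ) : PG p :=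
  (x p 0) ^ i * ((x p 1) ^ j * ((x p 2) ^ k * ((x p 3) ^ l * (z p) ^ m)))

lemma abel_mul (k l m k' l' m' : ℕ) :
    ((x p 2) ^ k * ((x p 3) ^ l * (z p) ^ m)) * ((x p 2) ^ k' * ((x p 3) ^ l' * (z p) ^ m'))
    = (x p 2) ^ (k + k') * ((x p 3) ^ (l + l') * (z p) ^ (m + m')) := by
  have c32 : ∀ a b : ℕ, Commute ((x p 3) ^ a) ((x p 2) ^ b) :=
    fun a b => (x3_central (x p 2)).pow_pow a b
  have cz2 : ∀ a b : ℕ, Commute ((z p) ^ a) ((x p 2) ^ b) :=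
    fun a b => (z_central (x p 2)).pow_pow a b
  have cz3 : ∀ a b : ℕ, Commute ((z p) ^ a) ((x p 3) ^ b) :=
    fun a b => (z_central (x p 3)).pow_pow a b
  calc (x p 2) ^ k * ((x p 3) ^ l * (z p) ^ m) * ((x p 2) ^ k' * ((x p 3) ^ l' * (z p) ^ m'))
      = (x p 2) ^ k * ((x p 3) ^ l * ((z p) ^ m * ((x p 2) ^ k' * ((x p 3) ^ l' * (z p) ^ m')))) := by
        simp only [mul_assoc]
    _ = (x p 2) ^ k * ((x p 3) ^ l * ((x p 2) ^ k' * ((z p) ^ m * ((x p 3) ^ l' * (z p) ^ m')))) := by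
        rw [(cz2 m k').left_comm]
    _ = (x p 2) ^ k * ((x p 2) ^ k' * ((x p 3) ^ l * ((z p) ^ m * ((x p 3) ^ l' * (z p) ^ m')))) := by
        rw [(c32 l k').symm.left_comm]
    _ = (x p 2) ^ (k + k') * ((x p 3) ^ l * ((x p 3) ^ l' * ((z p) ^ m * (z p) ^ m'))) := by
        rw [(cz3 m l').left_comm, ← mul_assoc ((x p 2) ^ k), ← pow_add]
    _ = (x p 2) ^ (k + k') * ((x p 3) ^ (l + l') * (z p) ^ (m + m')) := by
        rw [← mul_assoc ((x p 3) ^ l), ← pow_add, ← pow_add]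

lemma nf_mul (i j k l m i' j' k' l' m' : ℕ) :
    nf (p := p) i j k l m * nf (p := p) i' j' k' l' m'
      = nf (p := p) (i + i') (j + j') (k + k') (l + l') (m + m' + j * i') := by
  unfold nf
  set C := (x p 2) ^ k * ((x p 3) ^ l * (z p) ^ m) with hC
  set C' := (x p 2) ^ k' * ((x p 3) ^ l' * (z p) ^ m') with hC'
  have hCc : ∀ w : PG p, Commute C w := by
    intro w
    exact (((x2_central _).pow_left k).mul_left
      (((x3_central _).pow_left l).mul_left ((z_central _).pow_left m))).symm.symm
  -- C * (x0^i' * (x1^j' * C')) = x0^i' * (x1^j' * (C * C'))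
  have step1 : C * ((x p 0) ^ i' * ((x p 1) ^ j' * C'))
      = (x p 0) ^ i' * ((x p 1) ^ j' * (C * C')) := by
    rw [(hCc _).left_comm, (hCc _).left_comm]
  calc ((x p 0) ^ i * ((x p 1) ^ j * C)) * ((x p 0) ^ i' * ((x p 1) ^ j' * C'))
      = (x p 0) ^ i * ((x p 1) ^ j * (C * ((x p 0) ^ i' * ((x p 1) ^ j' * C')))) := by
        rw [mul_assoc, mul_assoc]
    _ = (x p 0) ^ i * ((x p 1) ^ j * ((x p 0) ^ i' * ((x p 1) ^ j' * (C * C')))) := by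
        rw [step1]
    _ = (x p 0) ^ i * (((x p 1) ^ j * (x p 0) ^ i') * ((x p 1) ^ j' * (C * C'))) := by
        rw [← mul_assoc ((x p 1) ^ j)]
    _ = (x p 0) ^ i * (((x p 0) ^ i' * ((x p 1) ^ j * (z p) ^ (j * i'))) * ((x p 1) ^ j' * (C * C'))) := by
        rw [swap_pow]
    _ = (x p 0) ^ (i + i') * ((x p 1) ^ j * ((z p) ^ (j * i') * ((x p 1) ^ j' * (C * C')))) := by
        rw [pow_add]; simp only [mul_assoc]
    _ = (x p 0) ^ (i + i') * ((x p 1) ^ j * ((x p 1) ^ j' * ((z p) ^ (j * i') * (C * C')))) := by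
        rw [((z_central _).pow_left (j * i')).left_comm]
    _ = (x p 0) ^ (i + i') * ((x p 1) ^ (j + j') * ((z p) ^ (j * i') * (C * C'))) := by
        rw [← mul_assoc ((x p 1) ^ j), ← pow_add]
    _ = (x p 0) ^ (i + i') * ((x p 1) ^ (j + j') *
          ((x p 2) ^ (k + k') * ((x p 3) ^ (l + l') * (z p) ^ (m + m' + j * i')))) := by
        congr 1
        congr 1
        rw [hC, hC', abel_mul, ((z_central _).pow_left (j * i')).left_comm,
          ((z_central _).pow_left (j * i')).left_comm, ← pow_add]
        congr 3
        ring

lemma pow_dvd_eq_one (g : PG p) {n : ℕ} (h : p ∣ n) : g ^ n = 1 := by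
  obtain ⟨q, rfl⟩ := h
  rw [pow_mul, pow_p_eq_one, one_pow]

variable (p) [Fact p.Prime] in
def NF : Subgroup (PG p) where
  carrier := {g | ∃ i j k l m : ℕ, g = nf (p := p) i j k l m}
  one_mem' := ⟨0, 0, 0, 0, 0, by simp [nf]⟩
  mul_mem' := by
    rintro a b ⟨i, j, k, l, m, rfl⟩ ⟨i', j', k', l', m', rfl⟩
    exact ⟨_, _, _, _, _, nf_mul i j k l m i' j' k' l' m'⟩
  inv_mem' := by
    rintro a ⟨i, j, k, l, m, rfl⟩
    -- a⁻¹ = a ^ (p - 1) and powers stay in normal form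
    have hpow : ∀ n : ℕ, ∃ i' j' k' l' m' : ℕ,
        (nf (p := p) i j k l m) ^ n = nf (p := p) i' j' k' l' m' := by
      intro n
      induction n with
      | zero => exact ⟨0, 0, 0, 0, 0, by simp [nf]⟩
      | succ n ih =>
        obtain ⟨a', b', c', d', e', h⟩ := ih
        exact ⟨_, _, _, _, _, by rw [pow_succ, h, nf_mul]⟩
    have hinv : (nf (p := p) i j k l m)⁻¹ = (nf (p := p) i j k l m) ^ (p - 1) := by
      apply inv_eq_of_mul_eq_one_right
      rw [← pow_succ', show p - 1 + 1 = p from by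
        have := (Fact.out : p.Prime).pos; omega]
      exact pow_p_eq_one _
    obtain ⟨i', j', k', l', m', h⟩ := hpow (p - 1)
    exact ⟨i', j', k', l', m', by rw [hinv, h]⟩

end PG

section Iso

variable {p : ℕ} [Fact p.Prime] [Fact (5 ≤ p)]

lemma hp5 : 5 ≤ p := Fact.out
lemma hpp : p.Prime := Fact.out
lemma hpodd : p ≠ 2 := by have := hp5 (p := p); omega

namespace Mdl

lemma pow_p' (x : Mdl p) : x ^ p = 1 := pow_p hpp hpodd x

lemma cmm_eq (x y : Mdl p) : cmm x y = ⟨0, 0, 0, 0, x.b * y.a - y.b * x.a⟩ := comm_eq x y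

lemma cmm_cmm (u v w : Mdl p) : cmm (cmm u v) w = 1 := by
  rw [cmm_eq, cmm_eq]
  ext <;> simp

end Mdl

/-- images of the four generators -/
def gens (i : Fin 4) : Mdl p :=
  ⟨if i = 0 then 1 else 0, if i = 1 then 1 else 0, if i = 2 then 1 else 0,
   if i = 3 then 1 else 0, 0⟩

lemma gens_rels_aux : ∀ r ∈ classTwoRels p 4 R5, FreeGroup.lift (gens (p := p)) r = 1 := by
  apply lift_rels _ Mdl.pow_p' Mdl.cmm_cmm <;>
    (rw [Mdl.cmm_eq]; ext <;> simp [gens])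

def φ : PG p →* Mdl p := PresentedGroup.toGroup gens_rels_aux

@[simp] lemma φ_x (i : Fin 4) : φ (PG.x p i) = gens i := PresentedGroup.toGroup.of _

lemma φ_z : φ (PG.z p) = ⟨0, 0, 0, 0, 1⟩ := by
  rw [PG.z, map_cmm, φ_x, φ_x, Mdl.cmm_eq]
  ext <;> simp [gens]

lemma φ_nf (i j k l m : ℕ) : φ (PG.nf i j k l m) = ⟨(i : ZMod p), j, k, l, m⟩ := by
  unfold PG.nf
  simp only [map_mul, map_pow, φ_x, φ_z]
  rw [Mdl.pow_def, Mdl.pow_def, Mdl.pow_def, Mdl.pow_def, Mdl.pow_def]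
  ext <;> simp [gens]

lemma NF_mem (g : PG p) : g ∈ PG.NF p := by
  apply PresentedGroup.generated_by
  intro j
  fin_cases j
  · exact ⟨1, 0, 0, 0, 0, by simp [PG.nf, PG.x]⟩
  · exact ⟨0, 1, 0, 0, 0, by simp [PG.nf, PG.x]⟩
  · exact ⟨0, 0, 1, 0, 0, by simp [PG.nf, PG.x]⟩
  · exact ⟨0, 0, 0, 1, 0, by simp [PG.nf, PG.x]⟩

lemma φ_injective : Function.Injective (φ (p := p)) := by
  rw [injective_iff_map_eq_one]
  intro g hg
  obtain ⟨i, j, k, l, m, rfl⟩ := NF_mem g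
  rw [φ_nf] at hg
  haveI : NeZero p := ⟨hpp.ne_zero⟩
  have ha : ((i : ZMod p)) = 0 := congrArg Mdl.a hg
  have hb : ((j : ZMod p)) = 0 := congrArg Mdl.b hg
  have hc : ((k : ZMod p)) = 0 := congrArg Mdl.c hg
  have hd : ((l : ZMod p)) = 0 := congrArg Mdl.d hg
  have he : ((m : ZMod p)) = 0 := congrArg Mdl.e hg
  rw [ZMod.natCast_eq_zero_iff] at ha hb hc hd he
  unfold PG.nf
  rw [PG.pow_dvd_eq_one _ ha, PG.pow_dvd_eq_one _ hb, PG.pow_dvd_eq_one _ hc,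
    PG.pow_dvd_eq_one _ hd, PG.pow_dvd_eq_one _ he]
  simp

lemma φ_surjective : Function.Surjective (φ (p := p)) := by
  intro y
  haveI : NeZero p := ⟨hpp.ne_zero⟩
  refine ⟨PG.nf y.a.val y.b.val y.c.val y.d.val y.e.val, ?_⟩
  rw [φ_nf]
  ext <;> simp [ZMod.natCast_val, ZMod.cast_id]

/-- The presented group is isomorphic to the model. -/
noncomputable def Φ : PG p ≃* Mdl p := MulEquiv.ofBijective φ ⟨φ_injective, φ_surjective⟩

end Iso

/-! ### Conjugacy classes of the model -/

section Conj

variable {p : ℕ} [Fact p.Prime]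

namespace Mdl

lemma conj_eq (g x : Mdl p) :
    g * x * g⁻¹ = ⟨x.a, x.b, x.c, x.d, x.e + g.b * x.a - x.b * g.a⟩ := by
  ext <;> simp <;> ring

/-- classification target for conjugacy classes -/
abbrev CT (p : ℕ) : Type :=
  ({v : ZMod p × ZMod p // v ≠ 0} × (ZMod p × ZMod p)) ⊕ (ZMod p × ZMod p × ZMod p)

def classify (x : Mdl p) : CT p :=
  if h : (x.a, x.b) = (0, 0) then .inr (x.c, x.d, x.e)
  else .inl ⟨⟨(x.a, x.b), h⟩, (x.c, x.d)⟩

lemma classify_conj (g x : Mdl p) : classify (g * x * g⁻¹) = classify x := by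
  rw [conj_eq]
  unfold classify
  by_cases h : (x.a, x.b) = (0, 0)
  · have ha : x.a = 0 := congrArg Prod.fst h
    have hb : x.b = 0 := congrArg Prod.snd h
    simp [ha, hb]
  · simp only [dif_neg h]

lemma isConj_of_classify {x y : Mdl p} (h : classify x = classify y) : IsConj x y := by
  unfold classify at h
  by_cases hx : (x.a, x.b) = (0, 0) <;> by_cases hy : (y.a, y.b) = (0, 0)
  · rw [dif_pos hx, dif_pos hy] at h
    simp only [Sum.inr.injEq, Prod.mk.injEq] at h
    rw [Prod.mk.injEq] at hx hy
    have : x = y := by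
      ext
      · rw [hx.1, hy.1]
      · rw [hx.2, hy.2]
      · exact h.1
      · exact h.2.1
      · exact h.2.2
    rw [this]
  · rw [dif_pos hx, dif_neg hy] at h; exact absurd h (by simp)
  · rw [dif_neg hx, dif_pos hy] at h; exact absurd h (by simp)
  · rw [dif_neg hx, dif_neg hy] at h
    simp only [Sum.inl.injEq, Prod.mk.injEq, Subtype.mk.injEq] at h
    obtain ⟨⟨ha, hb⟩, hc, hd⟩ := h
    rw [isConj_iff]
    have hne : x.a ≠ 0 ∨ x.b ≠ 0 := by
      by_contra hcon
      push_neg at hcon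
      exact hx (by rw [hcon.1, hcon.2])
    rcases hne with hna | hnb
    · refine ⟨⟨0, (y.e - x.e) * x.a⁻¹, 0, 0, 0⟩, ?_⟩
      rw [conj_eq]
      rw [ha] at hna
      ext <;> simp [ha, hb, hc, hd]
      field_simp
      ring
    · refine ⟨⟨-(y.e - x.e) * x.b⁻¹, 0, 0, 0, 0⟩, ?_⟩
      rw [conj_eq]
      rw [hb] at hnb
      ext <;> simp [ha, hb, hc, hd]
      field_simp
      ring

lemma classify_eq_iff_isConj (x y : Mdl p) : IsConj x y ↔ classify x = classify y := by
  constructor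
  · intro h
    rw [isConj_iff] at h
    obtain ⟨c, rfl⟩ := h
    exact (classify_conj c x).symm
  · exact isConj_of_classify

noncomputable def classifyQ : ConjClasses (Mdl p) → CT p :=
  Quotient.lift classify fun a b (h : IsConj a b) => (classify_eq_iff_isConj a b).1 h

lemma classifyQ_bij : Function.Bijective (classifyQ (p := p)) := by
  constructor
  · intro a b
    induction a using Quotient.ind
    induction b using Quotient.ind
    intro h
    exact Quotient.sound ((classify_eq_iff_isConj _ _).2 h)
  · rintro (⟨⟨⟨va, vb⟩, hv⟩, ⟨c, d⟩⟩ | ⟨c, d, e⟩)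
    · refine ⟨⟦⟨va, vb, c, d, 0⟩⟧, ?_⟩
      show classify _ = _
      unfold classify
      rw [dif_neg (show ¬((va, vb) = ((0 : ZMod p), (0 : ZMod p))) from hv)]
    · refine ⟨⟦⟨0, 0, c, d, e⟩⟧, ?_⟩
      show classify _ = _
      unfold classify
      rw [dif_pos rfl]

lemma card_conjClasses_model : Nat.card (ConjClasses (Mdl p)) = p ^ 4 + p ^ 3 - p ^ 2 := by
  haveI : NeZero p := ⟨(Fact.out : p.Prime).ne_zero⟩
  rw [Nat.card_congr (Equiv.ofBijective _ classifyQ_bij)]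
  have h1 : Nat.card {v : ZMod p × ZMod p // v ≠ 0} = p ^ 2 - 1 := by
    rw [Nat.card_eq_fintype_card, Fintype.card_subtype_compl]
    simp [Fintype.card_subtype_eq, ZMod.card, sq]
  rw [Nat.card_sum]
  simp only [Nat.card_prod, Nat.card_zmod, h1]
  have hp : 0 < p := (Fact.out : p.Prime).pos
  have h2 : 1 ≤ p ^ 2 := Nat.one_le_pow _ _ hp
  have h3 : p ^ 2 ≤ p ^ 4 + p ^ 3 :=
    le_trans (Nat.pow_le_pow_right hp (by norm_num)) (Nat.le_add_right _ _)
  zify [h2, h3]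
  ring

end Mdl

end Conj

/-! ### Automorphisms of the model -/

section Aut

variable {p : ℕ} [Fact p.Prime] [Fact (5 ≤ p)]

instance : Finite (Mdl p) := by
  haveI : NeZero p := ⟨(Fact.out : p.Prime).ne_zero⟩
  exact Finite.of_injective (fun x : Mdl p => (x.a, x.b, x.c, x.d, x.e))
    (by rintro ⟨⟩ ⟨⟩ h; simp only [Prod.mk.injEq] at h; ext <;> tauto)

@[simp] lemma Phi_x (i : Fin 4) : Φ (PG.x p i) = gens i := φ_x i

lemma Phi_symm_gens (i : Fin 4) : (Φ (p := p)).symm (gens i) = PG.x p i := by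
  rw [MulEquiv.symm_apply_eq, Phi_x]

/-- every hom out of the model is determined by the images of the generators -/
lemma hom_ext {G : Type*} [Group G] {f g : Mdl p →* G}
    (h : ∀ i, f (gens i) = g (gens i)) : f = g := by
  have key : f.comp (Φ (p := p)).toMonoidHom = g.comp (Φ (p := p)).toMonoidHom := by
    ext i
    show f (Φ (PresentedGroup.of i)) = g (Φ (PresentedGroup.of i))
    have hx : Φ (PresentedGroup.of i) = gens i := φ_x (p := p) i
    rw [hx, h]
  ext m
  have hm : m = Φ ((Φ (p := p)).symm m) := (MulEquiv.apply_symm_apply _ _).symm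
  rw [hm]
  exact DFunLike.congr_fun key _

/-- build a hom of the model from images of the generators satisfying the relations -/
noncomputable def homOfTuple (f : Fin 4 → Mdl p)
    (h20 : cmm (f 2) (f 0) = 1) (h21 : cmm (f 2) (f 1) = 1)
    (h30 : cmm (f 3) (f 0) = 1) (h31 : cmm (f 3) (f 1) = 1)
    (h32 : cmm (f 3) (f 2) = 1) : Mdl p →* Mdl p :=
  (PresentedGroup.toGroup (lift_rels f Mdl.pow_p' Mdl.cmm_cmm h20 h21 h30 h31 h32)).comp
    (Φ (p := p)).symm.toMonoidHom

lemma homOfTuple_gens (f : Fin 4 → Mdl p) (h20 h21 h30 h31 h32) (i : Fin 4) :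
    homOfTuple f h20 h21 h30 h31 h32 (gens i) = f i := by
  unfold homOfTuple
  simp only [MonoidHom.comp_apply, MulEquiv.coe_toMonoidHom, Phi_symm_gens]
  exact PresentedGroup.toGroup.of _

namespace Mdl

lemma pow_central (x : Mdl p) (hx : x.a = 0) (hx' : x.b = 0) (n : ℕ) :
    x ^ n = ⟨0, 0, n * x.c, n * x.d, n * x.e⟩ := by
  rw [pow_def, hx, hx']
  ext <;> simp

lemma natval (t : ZMod p) : ((t.val : ℕ) : ZMod p) = t := by
  haveI : NeZero p := ⟨(Fact.out : p.Prime).ne_zero⟩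
  simp [ZMod.natCast_val, ZMod.cast_id]

/-- The surjectivity criterion: a subgroup containing a suitable tuple is everything. -/
lemma top_of_subgroup (H : Subgroup (Mdl p)) (A B : Mdl p) (c3 c4 c5 d3 d4 d5 : ZMod p)
    (hA : A ∈ H) (hB : B ∈ H)
    (hC : (⟨0, 0, c3, c4, c5⟩ : Mdl p) ∈ H) (hD : (⟨0, 0, d3, d4, d5⟩ : Mdl p) ∈ H)
    (h1 : A.a * B.b - A.b * B.a ≠ 0) (h2 : c3 * d4 - c4 * d3 ≠ 0) :
    ∀ y : Mdl p, y ∈ H := by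
  -- step 1 : central z-powers
  have hz : ∀ t : ZMod p, (⟨0, 0, 0, 0, t⟩ : Mdl p) ∈ H := by
    intro t
    have hw : cmm B A ∈ H := by
      unfold cmm; exact H.mul_mem (H.mul_mem (H.mul_mem (H.inv_mem hB) (H.inv_mem hA)) hB) hA
    rw [Mdl.cmm_eq] at hw
    have hmem := H.pow_mem hw (t * (A.a * B.b - A.b * B.a)⁻¹).val
    rw [Mdl.pow_central _ rfl rfl] at hmem
    have he : (⟨0, 0, ((t * (A.a * B.b - A.b * B.a)⁻¹).val : ℕ) * (0 : ZMod p),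
        ((t * (A.a * B.b - A.b * B.a)⁻¹).val : ℕ) * (0 : ZMod p),
        ((t * (A.a * B.b - A.b * B.a)⁻¹).val : ℕ) * (B.b * A.a - A.b * B.a)⟩ : Mdl p)
        = (⟨0, 0, 0, 0, t⟩ : Mdl p) := by
      ext <;> dsimp only
      · simp
      · simp
      · rw [natval]; linear_combination t * mul_inv_cancel₀ h1
    rwa [he] at hmem
  -- step 2 : central part
  have hcen : ∀ k l t : ZMod p, (⟨0, 0, k, l, t⟩ : Mdl p) ∈ H := by
    intro k l t
    have hC' : (⟨0, 0, c3, c4, 0⟩ : Mdl p) ∈ H := by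
      have hmem := H.mul_mem hC (hz (-c5))
      have he : (⟨0, 0, c3, c4, c5⟩ : Mdl p) * ⟨0, 0, 0, 0, -c5⟩ = ⟨0, 0, c3, c4, 0⟩ := by
        ext <;> simp
      rwa [he] at hmem
    have hD' : (⟨0, 0, d3, d4, 0⟩ : Mdl p) ∈ H := by
      have hmem := H.mul_mem hD (hz (-d5))
      have he : (⟨0, 0, d3, d4, d5⟩ : Mdl p) * ⟨0, 0, 0, 0, -d5⟩ = ⟨0, 0, d3, d4, 0⟩ := by
        ext <;> simp
      rwa [he] at hmem
    have hmem := H.mul_mem (H.mul_mem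
      (H.pow_mem hC' ((k * d4 - l * d3) * (c3 * d4 - c4 * d3)⁻¹).val)
      (H.pow_mem hD' ((l * c3 - k * c4) * (c3 * d4 - c4 * d3)⁻¹).val)) (hz t)
    rw [Mdl.pow_central _ rfl rfl, Mdl.pow_central _ rfl rfl] at hmem
    have he : ((⟨0, 0, (((k * d4 - l * d3) * (c3 * d4 - c4 * d3)⁻¹).val : ℕ) * c3,
          (((k * d4 - l * d3) * (c3 * d4 - c4 * d3)⁻¹).val : ℕ) * c4,
          (((k * d4 - l * d3) * (c3 * d4 - c4 * d3)⁻¹).val : ℕ) * (0 : ZMod p)⟩ : Mdl p) *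
        ⟨0, 0, (((l * c3 - k * c4) * (c3 * d4 - c4 * d3)⁻¹).val : ℕ) * d3,
          (((l * c3 - k * c4) * (c3 * d4 - c4 * d3)⁻¹).val : ℕ) * d4,
          (((l * c3 - k * c4) * (c3 * d4 - c4 * d3)⁻¹).val : ℕ) * (0 : ZMod p)⟩) *
        ⟨0, 0, 0, 0, t⟩ = (⟨0, 0, k, l, t⟩ : Mdl p) := by
      ext <;> simp only [Mdl.mul_a, Mdl.mul_b, Mdl.mul_c, Mdl.mul_d, Mdl.mul_e]
      · simp
      · simp
      · rw [natval, natval]; linear_combination k * mul_inv_cancel₀ h2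
      · rw [natval, natval]; linear_combination l * mul_inv_cancel₀ h2
      · simp [natval]
    rwa [he] at hmem
  -- step 3 : the (a, b)-part
  intro y
  have hu : (⟨A.a, A.b, 0, 0, 0⟩ : Mdl p) ∈ H := by
    have hmem := H.mul_mem hA (hcen (-A.c) (-A.d) (-A.e))
    have he : A * ⟨0, 0, -A.c, -A.d, -A.e⟩ = (⟨A.a, A.b, 0, 0, 0⟩ : Mdl p) := by
      ext <;> simp
    rwa [he] at hmem
  have hv : (⟨B.a, B.b, 0, 0, 0⟩ : Mdl p) ∈ H := by
    have hmem := H.mul_mem hB (hcen (-B.c) (-B.d) (-B.e))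
    have he : B * ⟨0, 0, -B.c, -B.d, -B.e⟩ = (⟨B.a, B.b, 0, 0, 0⟩ : Mdl p) := by
      ext <;> simp
    rwa [he] at hmem
  set mv : ℕ := ((y.a * B.b - y.b * B.a) * (A.a * B.b - A.b * B.a)⁻¹).val with hmv
  set nv : ℕ := ((y.b * A.a - y.a * A.b) * (A.a * B.b - A.b * B.a)⁻¹).val with hnv
  set P1 : Mdl p := (⟨A.a, A.b, 0, 0, 0⟩ : Mdl p) ^ mv * (⟨B.a, B.b, 0, 0, 0⟩ : Mdl p) ^ nv
    with hP1
  have hP1mem : P1 ∈ H := H.mul_mem (H.pow_mem hu mv) (H.pow_mem hv nv)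
  have hP1a : P1.a = y.a := by
    rw [hP1, Mdl.pow_def, Mdl.pow_def]
    show (mv : ZMod p) * A.a + (nv : ZMod p) * B.a = y.a
    rw [hmv, hnv, natval, natval]
    linear_combination y.a * mul_inv_cancel₀ h1
  have hP1b : P1.b = y.b := by
    rw [hP1, Mdl.pow_def, Mdl.pow_def]
    show (mv : ZMod p) * A.b + (nv : ZMod p) * B.b = y.b
    rw [hmv, hnv, natval, natval]
    linear_combination y.b * mul_inv_cancel₀ h1
  have hP1c : P1.c = 0 := by
    rw [hP1, Mdl.pow_def, Mdl.pow_def]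
    show (mv : ZMod p) * (0 : ZMod p) + (nv : ZMod p) * (0 : ZMod p) = 0
    ring
  have hP1d : P1.d = 0 := by
    rw [hP1, Mdl.pow_def, Mdl.pow_def]
    show (mv : ZMod p) * (0 : ZMod p) + (nv : ZMod p) * (0 : ZMod p) = 0
    ring
  have hmem := H.mul_mem hP1mem (hcen y.c y.d (y.e - P1.e))
  have he : P1 * ⟨0, 0, y.c, y.d, y.e - P1.e⟩ = y := by
    ext
    · simp [hP1a]
    · simp [hP1b]
    · simp [hP1c]
    · simp [hP1d]
    · simp
  rwa [he] at hmem

end Mdl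

/-- linear functionals on the model -/
def lin (al be ga de : ZMod p) : Mdl p →* Multiplicative (ZMod p) where
  toFun x := Multiplicative.ofAdd (al * x.a + be * x.b + ga * x.c + de * x.d)
  map_one' := by
    show Multiplicative.ofAdd _ = Multiplicative.ofAdd 0
    congr 1
    simp
  map_mul' x y := by
    show Multiplicative.ofAdd _ = Multiplicative.ofAdd _ * Multiplicative.ofAdd _
    rw [← ofAdd_add]
    congr 1
    simp only [Mdl.mul_a, Mdl.mul_b, Mdl.mul_c, Mdl.mul_d]
    ring

lemma lin_vanish (ψ : MulAut (Mdl p)) (al be ga de : ZMod p)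
    (h : ∀ i, lin al be ga de (ψ (gens i)) = 1) :
    al = 0 ∧ be = 0 ∧ ga = 0 ∧ de = 0 := by
  have key : (lin al be ga de).comp ψ.toMonoidHom = 1 := by
    apply hom_ext
    intro i
    simpa using h i
  have hall : ∀ z : Mdl p, lin al be ga de z = 1 := by
    intro z
    have : z = ψ (ψ.symm z) := (MulEquiv.apply_symm_apply _ _).symm
    rw [this]
    exact DFunLike.congr_fun key (ψ.symm z)
  have ev : ∀ i, al * (gens (p := p) i).a + be * (gens i).b + ga * (gens i).c
      + de * (gens i).d = 0 := by
    intro i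
    have := hall (gens i)
    exact congrArg Multiplicative.toAdd this
  have e0 := ev 0
  have e1 := ev 1
  have e2 := ev 2
  have e3 := ev 3
  simp [gens] at e0 e1 e2 e3
  exact ⟨e0, e1, e2, e3⟩

lemma psi_cross (ψ : MulAut (Mdl p)) {i j : Fin 4} (h : cmm (gens (p := p) i) (gens j) = 1) :
    (ψ (gens i)).b * (ψ (gens j)).a - (ψ (gens j)).b * (ψ (gens i)).a = 0 := by
  have h1 : cmm (ψ (gens i)) (ψ (gens j)) = 1 := by
    have hmap : cmm (ψ (gens i)) (ψ (gens j)) = ψ (cmm (gens i) (gens j)) := by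
      simp [cmm]
    rw [hmap, h, map_one]
  rw [Mdl.cmm_eq] at h1
  exact congrArg Mdl.e h1

lemma gens_cmm_one {i j : Fin 4} (hi : (gens (p := p) i).b * (gens (p := p) j).a
    - (gens j).b * (gens i).a = 0) : cmm (gens (p := p) i) (gens j) = 1 := by
  rw [Mdl.cmm_eq, hi]
  rfl

lemma cross20 (ψ : MulAut (Mdl p)) :
    (ψ (gens 2)).b * (ψ (gens 0)).a - (ψ (gens 0)).b * (ψ (gens 2)).a = 0 :=
  psi_cross ψ (gens_cmm_one (by simp [gens]))
lemma cross21 (ψ : MulAut (Mdl p)) :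
    (ψ (gens 2)).b * (ψ (gens 1)).a - (ψ (gens 1)).b * (ψ (gens 2)).a = 0 :=
  psi_cross ψ (gens_cmm_one (by simp [gens]))
lemma cross30 (ψ : MulAut (Mdl p)) :
    (ψ (gens 3)).b * (ψ (gens 0)).a - (ψ (gens 0)).b * (ψ (gens 3)).a = 0 :=
  psi_cross ψ (gens_cmm_one (by simp [gens]))
lemma cross31 (ψ : MulAut (Mdl p)) :
    (ψ (gens 3)).b * (ψ (gens 1)).a - (ψ (gens 1)).b * (ψ (gens 3)).a = 0 :=
  psi_cross ψ (gens_cmm_one (by simp [gens]))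
lemma cross32 (ψ : MulAut (Mdl p)) :
    (ψ (gens 3)).b * (ψ (gens 2)).a - (ψ (gens 2)).b * (ψ (gens 3)).a = 0 :=
  psi_cross ψ (gens_cmm_one (by simp [gens]))

lemma aut_det1 (ψ : MulAut (Mdl p)) :
    (ψ (gens 0)).a * (ψ (gens 1)).b - (ψ (gens 0)).b * (ψ (gens 1)).a ≠ 0 := by
  set A := ψ (gens 0)
  set B := ψ (gens 1)
  set C := ψ (gens 2)
  set D := ψ (gens 3)
  intro h0
  have h20 := cross20 ψ
  have h21 := cross21 ψ
  have h30 := cross30 ψ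
  have h31 := cross31 ψ
  have h32 := cross32 ψ
  obtain ⟨s, t, hst, k0, k1, k2, k3⟩ : ∃ s t : ZMod p, ¬(s = 0 ∧ t = 0) ∧
      s * A.a + t * A.b = 0 ∧ s * B.a + t * B.b = 0 ∧
      s * C.a + t * C.b = 0 ∧ s * D.a + t * D.b = 0 := by
    by_cases hA : A.a = 0 ∧ A.b = 0
    · by_cases hB : B.a = 0 ∧ B.b = 0
      · by_cases hC : C.a = 0 ∧ C.b = 0
        · by_cases hD : D.a = 0 ∧ D.b = 0
          · exact ⟨1, 0, by simp, by simp [hA.1, hA.2], by simp [hB.1, hB.2],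
              by simp [hC.1, hC.2], by simp [hD.1, hD.2]⟩
          · refine ⟨D.b, -D.a, by simp only [neg_eq_zero]; tauto, by simp [hA.1, hA.2], by simp [hB.1, hB.2],
              by simp [hC.1, hC.2], by ring⟩
        · refine ⟨C.b, -C.a, by simp only [neg_eq_zero]; tauto, by simp [hA.1, hA.2], by simp [hB.1, hB.2],
            by ring, by linear_combination -h32⟩
      · refine ⟨B.b, -B.a, by simp only [neg_eq_zero]; tauto, by simp [hA.1, hA.2], by ring,
          by linear_combination -h21, by linear_combination -h31⟩
    · refine ⟨A.b, -A.a, by simp only [neg_eq_zero]; tauto, by ring, by linear_combination -h0,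
        by linear_combination -h20, by linear_combination -h30⟩
  have hvan := lin_vanish ψ s t 0 0 (by
    intro i
    fin_cases i
    · show Multiplicative.ofAdd (s * A.a + t * A.b + 0 * A.c + 0 * A.d)
        = Multiplicative.ofAdd (0 : ZMod p)
      congr 1
      linear_combination k0
    · show Multiplicative.ofAdd (s * B.a + t * B.b + 0 * B.c + 0 * B.d)
        = Multiplicative.ofAdd (0 : ZMod p)
      congr 1
      linear_combination k1
    · show Multiplicative.ofAdd (s * C.a + t * C.b + 0 * C.c + 0 * C.d)
        = Multiplicative.ofAdd (0 : ZMod p)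
      congr 1
      linear_combination k2
    · show Multiplicative.ofAdd (s * D.a + t * D.b + 0 * D.c + 0 * D.d)
        = Multiplicative.ofAdd (0 : ZMod p)
      congr 1
      linear_combination k3)
  exact hst ⟨hvan.1, hvan.2.1⟩

lemma aut_Cab (ψ : MulAut (Mdl p)) :
    (ψ (gens 2)).a = 0 ∧ (ψ (gens 2)).b = 0 ∧ (ψ (gens 3)).a = 0 ∧ (ψ (gens 3)).b = 0 := by
  have hδ := aut_det1 ψ
  have h20 := cross20 ψ
  have h21 := cross21 ψ
  have h30 := cross30 ψ
  have h31 := cross31 ψ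
  set A := ψ (gens 0)
  set B := ψ (gens 1)
  set C := ψ (gens 2)
  set D := ψ (gens 3)
  refine ⟨?_, ?_, ?_, ?_⟩
  · have : C.a * (A.a * B.b - A.b * B.a) = 0 := by linear_combination B.a * h20 - A.a * h21
    exact (mul_eq_zero.1 this).resolve_right hδ
  · have : C.b * (A.a * B.b - A.b * B.a) = 0 := by linear_combination B.b * h20 - A.b * h21
    exact (mul_eq_zero.1 this).resolve_right hδ
  · have : D.a * (A.a * B.b - A.b * B.a) = 0 := by linear_combination B.a * h30 - A.a * h31
    exact (mul_eq_zero.1 this).resolve_right hδ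
  · have : D.b * (A.a * B.b - A.b * B.a) = 0 := by linear_combination B.b * h30 - A.b * h31
    exact (mul_eq_zero.1 this).resolve_right hδ

lemma aut_det2 (ψ : MulAut (Mdl p)) :
    (ψ (gens 2)).c * (ψ (gens 3)).d - (ψ (gens 2)).d * (ψ (gens 3)).c ≠ 0 := by
  have hδ := aut_det1 ψ
  obtain ⟨hCa, hCb, hDa, hDb⟩ := aut_Cab ψ
  set A := ψ (gens 0)
  set B := ψ (gens 1)
  set C := ψ (gens 2)
  set D := ψ (gens 3)
  intro hd2
  obtain ⟨s, t, hst, kC, kD⟩ : ∃ s t : ZMod p, ¬(s = 0 ∧ t = 0) ∧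
      s * C.c + t * C.d = 0 ∧ s * D.c + t * D.d = 0 := by
    by_cases hC : C.c = 0 ∧ C.d = 0
    · by_cases hD : D.c = 0 ∧ D.d = 0
      · exact ⟨1, 0, by simp, by simp [hC.1, hC.2], by simp [hD.1, hD.2]⟩
      · exact ⟨D.d, -D.c, by simp only [neg_eq_zero]; tauto,
          by simp [hC.1, hC.2], by ring⟩
    · exact ⟨C.d, -C.c, by simp only [neg_eq_zero]; tauto,
        by ring, by linear_combination -hd2⟩
  set al : ZMod p := ((s * B.c + t * B.d) * A.b - (s * A.c + t * A.d) * B.b)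
      * (A.a * B.b - A.b * B.a)⁻¹ with hal
  set be : ZMod p := ((s * A.c + t * A.d) * B.a - (s * B.c + t * B.d) * A.a)
      * (A.a * B.b - A.b * B.a)⁻¹ with hbe
  have hvan := lin_vanish ψ al be s t (by
    intro i
    fin_cases i
    · show Multiplicative.ofAdd (al * A.a + be * A.b + s * A.c + t * A.d)
        = Multiplicative.ofAdd (0 : ZMod p)
      congr 1
      rw [hal, hbe]
      linear_combination (-(s * A.c + t * A.d)) * mul_inv_cancel₀ hδ
    · show Multiplicative.ofAdd (al * B.a + be * B.b + s * B.c + t * B.d)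
        = Multiplicative.ofAdd (0 : ZMod p)
      congr 1
      rw [hal, hbe]
      linear_combination (-(s * B.c + t * B.d)) * mul_inv_cancel₀ hδ
    · show Multiplicative.ofAdd (al * C.a + be * C.b + s * C.c + t * C.d)
        = Multiplicative.ofAdd (0 : ZMod p)
      congr 1
      rw [hCa, hCb]
      linear_combination kC
    · show Multiplicative.ofAdd (al * D.a + be * D.b + s * D.c + t * D.d)
        = Multiplicative.ofAdd (0 : ZMod p)
      congr 1
      rw [hDa, hDb]
      linear_combination kD)
  exact hst ⟨hvan.2.2.1, hvan.2.2.2⟩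

/-- parameters of an automorphism -/
@[ext]
structure AutParam (p : ℕ) where
  A : Mdl p
  B : Mdl p
  c3 : ZMod p
  c4 : ZMod p
  c5 : ZMod p
  d3 : ZMod p
  d4 : ZMod p
  d5 : ZMod p
  hdet1 : A.a * B.b - A.b * B.a ≠ 0
  hdet2 : c3 * d4 - c4 * d3 ≠ 0

def tupleOf (q : AutParam p) : Fin 4 → Mdl p := fun i =>
  if i = 0 then q.A else if i = 1 then q.B
  else if i = 2 then ⟨0, 0, q.c3, q.c4, q.c5⟩ else ⟨0, 0, q.d3, q.d4, q.d5⟩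

lemma tupleOf_0 (q : AutParam p) : tupleOf q 0 = q.A := rfl
lemma tupleOf_1 (q : AutParam p) : tupleOf q 1 = q.B := rfl
lemma tupleOf_2 (q : AutParam p) : tupleOf q 2 = ⟨0, 0, q.c3, q.c4, q.c5⟩ := rfl
lemma tupleOf_3 (q : AutParam p) : tupleOf q 3 = ⟨0, 0, q.d3, q.d4, q.d5⟩ := rfl

lemma Mdl.cmm_central_left {x : Mdl p} (y : Mdl p) (hx : x.a = 0) (hx' : x.b = 0) :
    cmm x y = 1 := by
  rw [Mdl.cmm_eq, hx, hx']
  ext <;> simp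

noncomputable def homOfParam (q : AutParam p) : Mdl p →* Mdl p :=
  homOfTuple (tupleOf q)
    (Mdl.cmm_central_left _ rfl rfl) (Mdl.cmm_central_left _ rfl rfl)
    (Mdl.cmm_central_left _ rfl rfl) (Mdl.cmm_central_left _ rfl rfl)
    (Mdl.cmm_central_left _ rfl rfl)

lemma homOfParam_gens (q : AutParam p) (i : Fin 4) :
    homOfParam q (gens i) = tupleOf q i := homOfTuple_gens _ _ _ _ _ _ i

lemma homOfParam_surj (q : AutParam p) : Function.Surjective (homOfParam q) := by
  intro y
  have := Mdl.top_of_subgroup (homOfParam q).range q.A q.B q.c3 q.c4 q.c5 q.d3 q.d4 q.d5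
    ⟨gens 0, homOfParam_gens q 0⟩ ⟨gens 1, homOfParam_gens q 1⟩
    ⟨gens 2, homOfParam_gens q 2⟩ ⟨gens 3, homOfParam_gens q 3⟩
    q.hdet1 q.hdet2 y
  exact this

lemma homOfParam_bij (q : AutParam p) : Function.Bijective (homOfParam q) :=
  (Finite.surjective_iff_bijective).1 (homOfParam_surj q)

noncomputable def autOfParam (q : AutParam p) : MulAut (Mdl p) :=
  MulEquiv.ofBijective (homOfParam q) (homOfParam_bij q)

lemma autOfParam_gens (q : AutParam p) (i : Fin 4) :
    autOfParam q (gens i) = tupleOf q i := homOfParam_gens q i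

/-- the classification of automorphisms -/
noncomputable def autEquiv : MulAut (Mdl p) ≃ AutParam p where
  toFun ψ :=
    { A := ψ (gens 0), B := ψ (gens 1),
      c3 := (ψ (gens 2)).c, c4 := (ψ (gens 2)).d, c5 := (ψ (gens 2)).e,
      d3 := (ψ (gens 3)).c, d4 := (ψ (gens 3)).d, d5 := (ψ (gens 3)).e,
      hdet1 := aut_det1 ψ, hdet2 := aut_det2 ψ }
  invFun q := autOfParam q
  left_inv ψ := by
    obtain ⟨hCa, hCb, hDa, hDb⟩ := aut_Cab ψ
    set q : AutParam p :=
      { A := ψ (gens 0), B := ψ (gens 1),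
        c3 := (ψ (gens 2)).c, c4 := (ψ (gens 2)).d, c5 := (ψ (gens 2)).e,
        d3 := (ψ (gens 3)).c, d4 := (ψ (gens 3)).d, d5 := (ψ (gens 3)).e,
        hdet1 := aut_det1 ψ, hdet2 := aut_det2 ψ } with hqdef
    have e0 : autOfParam q (gens 0) = ψ (gens 0) := autOfParam_gens q 0
    have e1 : autOfParam q (gens 1) = ψ (gens 1) := autOfParam_gens q 1
    have e2 : autOfParam q (gens 2) = ψ (gens 2) := by
      rw [autOfParam_gens q 2, tupleOf_2]
      ext <;> simp [hqdef, hCa, hCb]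
    have e3 : autOfParam q (gens 3) = ψ (gens 3) := by
      rw [autOfParam_gens q 3, tupleOf_3]
      ext <;> simp [hqdef, hDa, hDb]
    have heq : (autOfParam q).toMonoidHom = ψ.toMonoidHom :=
      hom_ext (by intro i; fin_cases i; exacts [e0, e1, e2, e3])
    exact MulEquiv.toMonoidHom_injective heq
  right_inv q := by
    ext
    · exact congrArg Mdl.a (autOfParam_gens q 0)
    · exact congrArg Mdl.b (autOfParam_gens q 0)
    · exact congrArg Mdl.c (autOfParam_gens q 0)
    · exact congrArg Mdl.d (autOfParam_gens q 0)
    · exact congrArg Mdl.e (autOfParam_gens q 0)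
    · exact congrArg Mdl.a (autOfParam_gens q 1)
    · exact congrArg Mdl.b (autOfParam_gens q 1)
    · exact congrArg Mdl.c (autOfParam_gens q 1)
    · exact congrArg Mdl.d (autOfParam_gens q 1)
    · exact congrArg Mdl.e (autOfParam_gens q 1)
    · exact congrArg Mdl.c (autOfParam_gens q 2)
    · exact congrArg Mdl.d (autOfParam_gens q 2)
    · exact congrArg Mdl.e (autOfParam_gens q 2)
    · exact congrArg Mdl.c (autOfParam_gens q 3)
    · exact congrArg Mdl.d (autOfParam_gens q 3)
    · exact congrArg Mdl.e (autOfParam_gens q 3)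

/-! ### Counting -/

lemma card_line {v : ZMod p × ZMod p} (hv : v ≠ 0) :
    Nat.card {u : ZMod p × ZMod p // v.1 * u.2 - v.2 * u.1 = 0} = p := by
  haveI : NeZero p := ⟨(hpp (p := p)).ne_zero⟩
  have hv' : v.1 ≠ 0 ∨ v.2 ≠ 0 := by
    by_contra hcon
    push_neg at hcon
    exact hv (Prod.ext hcon.1 hcon.2)
  rcases hv' with h1 | h2
  · have E : {u : ZMod p × ZMod p // v.1 * u.2 - v.2 * u.1 = 0} ≃ ZMod p :=
      { toFun := fun u => u.val.1
        invFun := fun t => ⟨(t, v.2 * t * v.1⁻¹), by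
          linear_combination v.2 * t * mul_inv_cancel₀ h1⟩
        left_inv := by
          rintro ⟨⟨u1, u2⟩, hu⟩
          apply Subtype.ext
          dsimp only
          rw [Prod.mk.injEq]
          refine ⟨rfl, ?_⟩
          show v.2 * u1 * v.1⁻¹ = u2
          linear_combination -v.1⁻¹ * hu + u2 * mul_inv_cancel₀ h1
        right_inv := fun t => rfl }
    rw [Nat.card_congr E, Nat.card_zmod]
  · have E : {u : ZMod p × ZMod p // v.1 * u.2 - v.2 * u.1 = 0} ≃ ZMod p :=
      { toFun := fun u => u.val.2
        invFun := fun t => ⟨(v.1 * t * v.2⁻¹, t), by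
          linear_combination (-(v.1 * t)) * mul_inv_cancel₀ h2⟩
        left_inv := by
          rintro ⟨⟨u1, u2⟩, hu⟩
          apply Subtype.ext
          dsimp only
          rw [Prod.mk.injEq]
          refine ⟨?_, rfl⟩
          show v.1 * u2 * v.2⁻¹ = u1
          linear_combination v.2⁻¹ * hu + u1 * mul_inv_cancel₀ h2
        right_inv := fun t => rfl }
    rw [Nat.card_congr E, Nat.card_zmod]

lemma card_notline {v : ZMod p × ZMod p} (hv : v ≠ 0) :
    Nat.card {u : ZMod p × ZMod p // v.1 * u.2 - v.2 * u.1 ≠ 0} = p ^ 2 - p := by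
  haveI : NeZero p := ⟨(hpp (p := p)).ne_zero⟩
  have hline := card_line hv
  rw [Nat.card_eq_fintype_card] at hline ⊢
  rw [Fintype.card_subtype_compl, hline]
  congr 1
  rw [Fintype.card_prod, ZMod.card]
  ring

lemma card_det_pairs : Nat.card {w : (ZMod p × ZMod p) × (ZMod p × ZMod p) //
    w.1.1 * w.2.2 - w.1.2 * w.2.1 ≠ 0} = (p ^ 2 - 1) * (p ^ 2 - p) := by
  haveI : NeZero p := ⟨(hpp (p := p)).ne_zero⟩
  have E1 : {w : (ZMod p × ZMod p) × (ZMod p × ZMod p) //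
      w.1.1 * w.2.2 - w.1.2 * w.2.1 ≠ 0} ≃
      Σ v : {v : ZMod p × ZMod p // v ≠ 0},
        {u : ZMod p × ZMod p // v.val.1 * u.2 - v.val.2 * u.1 ≠ 0} :=
    { toFun := fun w => ⟨⟨w.val.1, fun h => w.prop (by rw [h]; simp)⟩, ⟨w.val.2, w.prop⟩⟩
      invFun := fun x => ⟨(x.1.val, x.2.val), x.2.prop⟩
      left_inv := fun w => rfl
      right_inv := fun x => rfl }
  rw [Nat.card_congr E1, Nat.card_eq_fintype_card, Fintype.card_sigma]
  have hfib : ∀ v : {v : ZMod p × ZMod p // v ≠ 0},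
      Fintype.card {u : ZMod p × ZMod p // v.val.1 * u.2 - v.val.2 * u.1 ≠ 0}
        = p ^ 2 - p := by
    intro v
    rw [← Nat.card_eq_fintype_card]
    exact card_notline v.prop
  rw [Finset.sum_congr rfl (fun v _ => hfib v), Finset.sum_const, smul_eq_mul]
  congr 1
  rw [Finset.card_univ, Fintype.card_subtype_compl]
  simp [Fintype.card_subtype_eq, ZMod.card, sq]

lemma card_autParam : Nat.card (AutParam p) =
    ((p ^ 2 - 1) * (p ^ 2 - p)) * ((p * p * p) * (p * p * p) *
      (((p ^ 2 - 1) * (p ^ 2 - p)) * (p * p))) := by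
  haveI : NeZero p := ⟨(hpp (p := p)).ne_zero⟩
  have E2 : AutParam p ≃
      {w : (ZMod p × ZMod p) × (ZMod p × ZMod p) // w.1.1 * w.2.2 - w.1.2 * w.2.1 ≠ 0} ×
      ((ZMod p × ZMod p × ZMod p) × (ZMod p × ZMod p × ZMod p) ×
        ({w : (ZMod p × ZMod p) × (ZMod p × ZMod p) //
            w.1.1 * w.2.2 - w.1.2 * w.2.1 ≠ 0} × (ZMod p × ZMod p))) :=
    { toFun := fun q => ⟨⟨((q.A.a, q.A.b), (q.B.a, q.B.b)), q.hdet1⟩,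
        ((q.A.c, q.A.d, q.A.e), ((q.B.c, q.B.d, q.B.e),
          (⟨((q.c3, q.c4), (q.d3, q.d4)), q.hdet2⟩, (q.c5, q.d5))))⟩
      invFun := fun x =>
        { A := ⟨x.1.val.1.1, x.1.val.1.2, x.2.1.1, x.2.1.2.1, x.2.1.2.2⟩
          B := ⟨x.1.val.2.1, x.1.val.2.2, x.2.2.1.1, x.2.2.1.2.1, x.2.2.1.2.2⟩
          c3 := x.2.2.2.1.val.1.1, c4 := x.2.2.2.1.val.1.2, c5 := x.2.2.2.2.1
          d3 := x.2.2.2.1.val.2.1, d4 := x.2.2.2.1.val.2.2, d5 := x.2.2.2.2.2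
          hdet1 := x.1.prop, hdet2 := x.2.2.2.1.prop }
      left_inv := fun q => rfl
      right_inv := fun x => rfl }
  rw [Nat.card_congr E2]
  simp only [Nat.card_prod, Nat.card_zmod, card_det_pairs]
  ring

end Aut

/-! ### Transport and final theorem -/

section Final

variable {p : ℕ} [Fact p.Prime] [Fact (5 ≤ p)]

noncomputable def conjEquiv : ConjClasses (PG p) ≃ ConjClasses (Mdl p) :=
  Quotient.congr (Φ (p := p)).toEquiv (by
    intro a b
    show IsConj a b ↔ IsConj (Φ a) (Φ b)
    constructor
    · intro h
      rw [isConj_iff] at h ⊢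
      obtain ⟨c, hc⟩ := h
      exact ⟨Φ c, by rw [← hc]; simp⟩
    · intro h
      rw [isConj_iff] at h ⊢
      obtain ⟨c, hc⟩ := h
      refine ⟨(Φ (p := p)).symm c, (Φ (p := p)).injective ?_⟩
      rw [← hc]
      simp)

noncomputable def autMulEquiv : MulAut (PG p) ≃ MulAut (Mdl p) where
  toFun α := ((Φ (p := p)).symm.trans α).trans (Φ (p := p))
  invFun β := ((Φ (p := p)).trans β).trans (Φ (p := p)).symm
  left_inv α := by
    apply MulEquiv.ext
    intro g
    simp [MulEquiv.trans_apply]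
  right_inv β := by
    apply MulEquiv.ext
    intro m
    simp [MulEquiv.trans_apply]

lemma card_conj_PG : Nat.card (ConjClasses (PG p)) = p ^ 4 + p ^ 3 - p ^ 2 := by
  rw [Nat.card_congr (conjEquiv (p := p))]
  exact Mdl.card_conjClasses_model

lemma card_aut_PG : Nat.card (MulAut (PG p)) =
    (p ^ 2 - 1) ^ 2 * (p ^ 2 - p) ^ 2 * p ^ 8 := by
  rw [Nat.card_congr (autMulEquiv (p := p)), Nat.card_congr (autEquiv (p := p)),
    card_autParam]
  have harith : ∀ a b : ℕ,
      (a * b) * ((p * p * p) * (p * p * p) * ((a * b) * (p * p))) = a ^ 2 * b ^ 2 * p ^ 8 :=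
    fun a b => by ring
  exact harith _ _

end Final


theorem group_5_4_1 (p : ℕ) (hp : p.Prime) (h5 : 5 ≤ p) :
    Nat.card (ConjClasses (ClassTwoGroup p 4 ({fgComm (FreeGroup.of (2 : Fin 4)) (FreeGroup.of (0 : Fin 4)), fgComm (FreeGroup.of (2 : Fin 4)) (FreeGroup.of (1 : Fin 4)), fgComm (FreeGroup.of (3 : Fin 4)) (FreeGroup.of (0 : Fin 4)), fgComm (FreeGroup.of (3 : Fin 4)) (FreeGroup.of (1 : Fin 4)), fgComm (FreeGroup.of (3 : Fin 4)) (FreeGroup.of (2 : Fin 4))} : Set (FreeGroup (Fin 4))))) = p ^ 4 + p ^ 3 - p ^ 2 ∧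
    Nat.card (MulAut (ClassTwoGroup p 4 ({fgComm (FreeGroup.of (2 : Fin 4)) (FreeGroup.of (0 : Fin 4)), fgComm (FreeGroup.of (2 : Fin 4)) (FreeGroup.of (1 : Fin 4)), fgComm (FreeGroup.of (3 : Fin 4)) (FreeGroup.of (0 : Fin 4)), fgComm (FreeGroup.of (3 : Fin 4)) (FreeGroup.of (1 : Fin 4)), fgComm (FreeGroup.of (3 : Fin 4)) (FreeGroup.of (2 : Fin 4))} : Set (FreeGroup (Fin 4))))) = (p ^ 2 - 1) ^ 2 * (p ^ 2 - p) ^ 2 * p ^ 8 := by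
  haveI : Fact p.Prime := ⟨hp⟩
  haveI : Fact (5 ≤ p) := ⟨h5⟩
  constructor
  · exact card_conj_PG (p := p)
  · exact card_aut_PG (p := p)
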